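/- Let N ∈ ℕ, let d be a positive divisor of N and let a be an integer with 0 ≤ a < N/d. Then the quotient group ℤ²/(ℤ·(d,0) + ℤ·(a, N/d)) is isomorphic to ℤ/Nℤ if and only if gcd(a, d, N/d) = 1. -/

import Mathlib

lemma exists_coprime_add_mul (a d m : ℕ) (hm0 : m ≠ 0) (h : Nat.gcd (Nat.gcd a d) m = 1) :
    ∃ k : ℕ, Nat.Coprime (a + k * d) m := by
  refine ⟨(m.primeFactors.filter (fun p => ¬ p ∣ a)).prod id, ?_⟩
  rw [Nat.Coprime, Nat.eq_one_iff_not_exists_prime_dvd]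
  intro p hp hpg
  have hpa : p ∣ a + (m.primeFactors.filter (fun p => ¬ p ∣ a)).prod id * d :=
    hpg.trans (Nat.gcd_dvd_left _ _)
  have hpm : p ∣ m := hpg.trans (Nat.gcd_dvd_right _ _)
  by_cases hpa' : p ∣ a
  · have hpk : ¬ p ∣ (m.primeFactors.filter (fun p => ¬ p ∣ a)).prod id := by
      intro hk
      obtain ⟨q, hq, hpq⟩ := (hp.prime.dvd_finset_prod_iff id).mp hk
      simp only [Finset.mem_filter, Nat.mem_primeFactors] at hq
      exact hq.2 ((Nat.prime_dvd_prime_iff_eq hp hq.1.1).mp hpq ▸ hpa')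
    have : p ∣ d := (hp.dvd_mul.mp ((Nat.dvd_add_right hpa').mp hpa)).resolve_left hpk
    exact hp.one_lt.ne' (Nat.eq_one_of_dvd_one
      (h ▸ Nat.dvd_gcd (Nat.dvd_gcd hpa' this) hpm))
  · have : p ∈ m.primeFactors.filter (fun p => ¬ p ∣ a) := by
      simp [Nat.mem_primeFactors, hp, hpm, hm0, hpa']
    have hpk : p ∣ (m.primeFactors.filter (fun p => ¬ p ∣ a)).prod id :=
      Finset.dvd_prod_of_mem id this
    exact hpa' ((Nat.dvd_add_right (hpk.mul_right d)).mp (by rwa [Nat.add_comm] at hpa))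

/-- For `d ∣ N` and `0 ≤ a < N/d`, the quotient
`ℤ²/(ℤ·(d,0) + ℤ·(a, N/d))` is isomorphic to `ℤ/Nℤ` iff `gcd(a, d, N/d) = 1`. -/
theorem quotient_by_sublattice_cyclic_iff (N d : ℕ) (hN : 0 < N)
    (hd : d ∣ N) (hd0 : 0 < d) (a : ℕ) (ha : a < N / d) :
    Nonempty ((ℤ × ℤ) ⧸
        (AddSubgroup.closure {((d : ℤ), (0 : ℤ)), ((a : ℤ), ((N / d : ℕ) : ℤ))}) ≃+
        ZMod N) ↔
      Nat.gcd (Nat.gcd a d) (N / d) = 1 := by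
  haveI : NeZero N := ⟨hN.ne'⟩
  set m : ℕ := N / d with hmdef
  have hNdm : d * m = N := Nat.mul_div_cancel' hd
  have hm0 : 0 < m := Nat.div_pos (Nat.le_of_dvd hN hd) hd0
  set K : AddSubgroup (ℤ × ℤ) :=
    AddSubgroup.closure {((d : ℤ), (0 : ℤ)), ((a : ℤ), (m : ℤ))} with hK
  constructor
  · -- iso → gcd = 1
    rintro ⟨e⟩
    set g : ℕ := Nat.gcd (Nat.gcd a d) m with hg
    haveI : NeZero g := ⟨(Nat.gcd_pos_of_pos_right _ hm0).ne'⟩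
    set ψ : ℤ × ℤ →+ ZMod g × ZMod g := AddMonoidHom.mk'
      (fun p => (((p.1 : ℤ) : ZMod g), ((p.2 : ℤ) : ZMod g)))
      (by intro p q; simp [Prod.fst_add, Prod.snd_add, Prod.ext_iff]) with hψ
    have hψapply : ∀ p : ℤ × ℤ, ψ p = (((p.1 : ℤ) : ZMod g), ((p.2 : ℤ) : ZMod g)) :=
      fun p => rfl
    have hKψ : K ≤ ψ.ker := by
      rw [hK, AddSubgroup.closure_le]
      rintro x hx
      simp only [Set.mem_insert_iff, Set.mem_singleton_iff] at hx
      have hga : (g : ℤ) ∣ (a : ℤ) := Int.natCast_dvd_natCast.mpr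
        ((Nat.gcd_dvd_left _ _).trans (Nat.gcd_dvd_left _ _))
      have hgd : (g : ℤ) ∣ (d : ℤ) := Int.natCast_dvd_natCast.mpr
        ((Nat.gcd_dvd_left _ _).trans (Nat.gcd_dvd_right _ _))
      have hgm : (g : ℤ) ∣ (m : ℤ) := Int.natCast_dvd_natCast.mpr (Nat.gcd_dvd_right _ _)
      rcases hx with rfl | rfl <;>
        simp [hψapply, AddMonoidHom.mem_ker, Prod.ext_iff,
          ZMod.intCast_zmod_eq_zero_iff_dvd, ZMod.natCast_eq_zero_iff, hga, hgd, hgm,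
          (Nat.gcd_dvd_left _ _).trans (Nat.gcd_dvd_left a d),
          (Nat.gcd_dvd_left _ _).trans (Nat.gcd_dvd_right a d),
          Nat.gcd_dvd_right (Nat.gcd a d) m, Int.natCast_dvd_natCast.mp hga,
          Int.natCast_dvd_natCast.mp hgd, Int.natCast_dvd_natCast.mp hgm]
    set f : ZMod N →+ ZMod g × ZMod g :=
      (QuotientAddGroup.lift K ψ hKψ).comp e.symm.toAddMonoidHom with hf
    have hfs : ∀ v : ZMod g × ZMod g, ∃ n : ℤ, n • f 1 = v := by
      intro v
      obtain ⟨x, hx⟩ := ZMod.intCast_surjective (n := g) v.1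
      obtain ⟨y, hy⟩ := ZMod.intCast_surjective (n := g) v.2
      have hz : f (e (QuotientAddGroup.mk (x, y))) = v := by
        rw [hf]
        simp only [AddMonoidHom.comp_apply, AddEquiv.coe_toAddMonoidHom,
          AddEquiv.symm_apply_apply, QuotientAddGroup.lift_mk, hψapply]
        exact Prod.ext hx hy
      obtain ⟨n, hn⟩ := ZMod.intCast_surjective (n := N) (e (QuotientAddGroup.mk (x, y)))
      refine ⟨n, ?_⟩
      have h1 : ((n : ℤ) : ZMod N) = n • (1 : ZMod N) := by simp [zsmul_eq_mul]
      rw [← map_zsmul, ← h1, hn, hz]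
    obtain ⟨n, hn⟩ := hfs (1, 0)
    obtain ⟨l, hl⟩ := hfs (0, 1)
    have hn1 : ((n : ℤ) : ZMod g) * (f 1).1 = 1 := by
      have := congrArg Prod.fst hn; simpa [zsmul_eq_mul] using this
    have hn2 : ((n : ℤ) : ZMod g) * (f 1).2 = 0 := by
      have := congrArg Prod.snd hn; simpa [zsmul_eq_mul] using this
    have hl1 : ((l : ℤ) : ZMod g) * (f 1).1 = 0 := by
      have := congrArg Prod.fst hl; simpa [zsmul_eq_mul] using this
    have hl2 : ((l : ℤ) : ZMod g) * (f 1).2 = 1 := by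
      have := congrArg Prod.snd hl; simpa [zsmul_eq_mul] using this
    have h10 : (1 : ZMod g) = 0 := by
      calc (1 : ZMod g) = (((n : ℤ) : ZMod g) * (f 1).1) * (((l : ℤ) : ZMod g) * (f 1).2) := by
            rw [hn1, hl2]; ring
        _ = (((n : ℤ) : ZMod g) * (f 1).2) * (((l : ℤ) : ZMod g) * (f 1).1) := by ring
        _ = 0 := by rw [hn2, hl1]; ring
    have : g ∣ 1 := by
      rwa [show (1 : ZMod g) = ((1 : ℕ) : ZMod g) by simp,
        ZMod.natCast_eq_zero_iff] at h10
    exact Nat.dvd_one.mp this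
  · -- gcd = 1 → iso
    intro hgcd
    obtain ⟨k, hk⟩ := exists_coprime_add_mul a d m hm0.ne' hgcd
    set c : ℤ := (a : ℤ) + k * d with hc
    have hck : IsCoprime c (m : ℤ) := by
      rw [Int.isCoprime_iff_gcd_eq_one]
      have : c = ((a + k * d : ℕ) : ℤ) := by push_cast; ring
      rw [this, Int.gcd_natCast_natCast]
      exact hk
    -- the homomorphism
    set φ : ℤ × ℤ →+ ZMod N := AddMonoidHom.mk'
      (fun p => (((m : ℤ) * p.1 - c * p.2 : ℤ) : ZMod N))
      (by intro p q; simp only [Prod.fst_add, Prod.snd_add]; push_cast; ring) with hφ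
    have hφapply : ∀ p : ℤ × ℤ, φ p = (((m : ℤ) * p.1 - c * p.2 : ℤ) : ZMod N) :=
      fun p => rfl
    have hφsurj : Function.Surjective φ := by
      obtain ⟨u, v, huv⟩ := hck
      intro z
      obtain ⟨n, rfl⟩ := ZMod.intCast_surjective (n := N) z
      refine ⟨n • ((v : ℤ), -u), ?_⟩
      rw [map_zsmul, hφapply]
      have h1 : ((m : ℤ) * v - c * (-u) : ℤ) = 1 := by linarith [huv]
      rw [h1]
      simp [zsmul_eq_mul]
    have hker : K = φ.ker := by
      apply le_antisymm
      · rw [hK]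
        rw [AddSubgroup.closure_le]
        rintro x hx
        simp only [Set.mem_insert_iff, Set.mem_singleton_iff] at hx
        rcases hx with rfl | rfl <;>
          simp only [SetLike.mem_coe, AddMonoidHom.mem_ker, hφapply] <;>
          rw [ZMod.intCast_zmod_eq_zero_iff_dvd]
        · exact ⟨1, by push_cast [← hNdm]; ring⟩
        · exact ⟨-k, by push_cast [← hNdm, hc]; ring⟩
      · rintro ⟨x, y⟩ hxy
        rw [AddMonoidHom.mem_ker, hφapply, ZMod.intCast_zmod_eq_zero_iff_dvd] at hxy
        have hNc : ((N : ℤ)) = (m : ℤ) * (d : ℤ) := by push_cast [← hNdm]; ring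
        have hmN : (m : ℤ) ∣ (N : ℤ) := ⟨d, by rw [hNc]⟩
        have h1 : (m : ℤ) ∣ c * y := by
          have h2 := (Dvd.intro x rfl : (m : ℤ) ∣ (m : ℤ) * x).sub (hmN.trans hxy)
          simpa using h2
        have h2 : (m : ℤ) ∣ y := hck.symm.dvd_of_dvd_mul_left h1
        obtain ⟨t, rfl⟩ := h2
        have h3 : (m : ℤ) * (d : ℤ) ∣ (m : ℤ) * (x - c * t) := by
          rw [← hNc]
          have : (m : ℤ) * (x - c * t) = (m : ℤ) * x - c * ((m : ℤ) * t) := by ring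
          rw [this]; exact hxy
        have hmne : (m : ℤ) ≠ 0 := by exact_mod_cast hm0.ne'
        have h4 : (d : ℤ) ∣ x - c * t := (mul_dvd_mul_iff_left hmne).mp h3
        obtain ⟨s, hs⟩ := h4
        have hmem : ((x, (m : ℤ) * t) : ℤ × ℤ) =
            (s + k * t) • (((d : ℤ)), (0 : ℤ)) + t • (((a : ℤ)), ((m : ℤ))) := by
          have hx : x = (d : ℤ) * s + c * t := by linarith [hs]
          simp only [Prod.ext_iff, Prod.smul_fst, Prod.smul_snd, Prod.fst_add, Prod.snd_add,
            smul_eq_mul]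
          constructor
          · rw [hx, hc]; ring
          · ring
        rw [hK, hmem]
        exact AddSubgroup.add_mem _
          (AddSubgroup.zsmul_mem _ (AddSubgroup.subset_closure (by simp)) _)
          (AddSubgroup.zsmul_mem _ (AddSubgroup.subset_closure (by simp)) _)
    rw [hker]
    exact ⟨QuotientAddGroup.quotientKerEquivOfSurjective φ hφsurj⟩
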